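/- Let Φ = {±e₁, ±e₂, ±(e₁+e₂), ±(e₁−e₂)} be the root system of type B₂ in ℝ² with standard basis e₁, e₂; call ±e₁, ±e₂ the short roots and ±(e₁+e₂), ±(e₁−e₂) the long roots. Define a ℤ-valued 2-cochain ω by ω(α|β) = 1 if both α and β are short roots, and ω(α|β) = 0 otherwise (for pairs α,β ∈ Φ₀ with α+β ∈ Φ₀, with ω vanishing if an argument is 0). Then ω is a symmetric 2-cocycle taking values in the nonnegative integers, but there is no 1-cochain ω¹: Φ₀ → ℤ taking only nonnegative values with ω¹(0) = 0 such that ω(α|β) = ω¹(α) + ω¹(β) − ω¹(α+β) for all pairs; that is, ω is not exact over the nonnegative integers (even though, by the triviality of H²₊(Φ,ℤ), it is exact over ℤ). -/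

import Mathlib

/-- The first standard basis vector `e₁` of `ℝ²`. -/
noncomputable def b2e1 : EuclideanSpace ℝ (Fin 2) := EuclideanSpace.single 0 1

/-- The second standard basis vector `e₂` of `ℝ²`. -/
noncomputable def b2e2 : EuclideanSpace ℝ (Fin 2) := EuclideanSpace.single 1 1

/-- The short roots `±e₁, ±e₂` of the `B₂` root system. -/
def B2short : Set (EuclideanSpace ℝ (Fin 2)) := {b2e1, -b2e1, b2e2, -b2e2}

/-- The long roots `±(e₁+e₂), ±(e₁-e₂)` of the `B₂` root system. -/
def B2long : Set (EuclideanSpace ℝ (Fin 2)) :=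
  {b2e1 + b2e2, -(b2e1 + b2e2), b2e1 - b2e2, -(b2e1 - b2e2)}

/-- The root system of type `B₂` in `ℝ²`. -/
def B2roots : Set (EuclideanSpace ℝ (Fin 2)) := B2short ∪ B2long

/-- `Φ₀ = Φ ∪ {0}` for the `B₂` root system. -/
def B2zero : Set (EuclideanSpace ℝ (Fin 2)) := insert 0 B2roots

open Classical in
/-- The 2-cochain on `B₂` given by `ω(α|β) = 1` if both `α` and `β` are short roots and
`ω(α|β) = 0` otherwise. -/
noncomputable def omegaB2 (α β : EuclideanSpace ℝ (Fin 2)) : ℤ :=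
  if α ∈ B2short ∧ β ∈ B2short then 1 else 0

@[simp] lemma b2e1_0 : b2e1 0 = 1 := by simp [b2e1, EuclideanSpace.single_apply]
@[simp] lemma b2e1_1 : b2e1 1 = 0 := by simp [b2e1, EuclideanSpace.single_apply]
@[simp] lemma b2e2_0 : b2e2 0 = 0 := by simp [b2e2, EuclideanSpace.single_apply]
@[simp] lemma b2e2_1 : b2e2 1 = 1 := by simp [b2e2, EuclideanSpace.single_apply]

lemma eq_iff_coords (v w : EuclideanSpace ℝ (Fin 2)) : v = w ↔ v 0 = w 0 ∧ v 1 = w 1 := by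
  constructor
  · rintro rfl; exact ⟨rfl, rfl⟩
  · rintro ⟨h0, h1⟩; ext i; fin_cases i <;> assumption

lemma shortIff (v : EuclideanSpace ℝ (Fin 2)) : v ∈ B2short ↔
    (v 0 = 1 ∧ v 1 = 0) ∨ (v 0 = -1 ∧ v 1 = 0) ∨ (v 0 = 0 ∧ v 1 = 1) ∨ (v 0 = 0 ∧ v 1 = -1) := by
  simp only [B2short, Set.mem_insert_iff, Set.mem_singleton_iff, eq_iff_coords]
  norm_num [PiLp.neg_apply]

lemma zeroIff (v : EuclideanSpace ℝ (Fin 2)) : v ∈ B2zero ↔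
    (v 0 = -1 ∨ v 0 = 0 ∨ v 0 = 1) ∧ (v 1 = -1 ∨ v 1 = 0 ∨ v 1 = 1) := by
  simp only [B2zero, B2roots, B2short, B2long, Set.mem_insert_iff, Set.mem_union,
    Set.mem_singleton_iff, eq_iff_coords]
  constructor
  · rintro (h | ((h|h|h|h) | (h|h|h|h))) <;>
      simp_all [PiLp.neg_apply, PiLp.add_apply, PiLp.sub_apply, PiLp.zero_apply]
  · rintro ⟨h0 | h0 | h0, h1 | h1 | h1⟩ <;>
      simp_all [PiLp.neg_apply, PiLp.add_apply, PiLp.sub_apply, PiLp.zero_apply]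

open Classical in
noncomputable def B2S (v : EuclideanSpace ℝ (Fin 2)) : ℤ := if v ∈ B2short then 1 else 0

lemma omega_eq (α β : EuclideanSpace ℝ (Fin 2)) : omegaB2 α β = B2S α * B2S β := by
  unfold omegaB2 B2S; split_ifs with h h1 h2 <;> simp_all

open Classical in
lemma B2S_ite (v : EuclideanSpace ℝ (Fin 2)) : B2S v =
    if (v 0 = 1 ∧ v 1 = 0) ∨ (v 0 = -1 ∧ v 1 = 0) ∨ (v 0 = 0 ∧ v 1 = 1) ∨ (v 0 = 0 ∧ v 1 = -1)
    then 1 else 0 := by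
  unfold B2S; exact if_congr (shortIff v) rfl rfl

lemma keyS {α β : EuclideanSpace ℝ (Fin 2)} (hα : α ∈ B2zero) (hβ : β ∈ B2zero)
    (hs : α + β ∈ B2zero) : B2S (α + β) = B2S α + B2S β - 2 * B2S α * B2S β := by
  rw [zeroIff] at hα hβ hs
  obtain ⟨ha0, ha1⟩ := hα
  obtain ⟨hb0, hb1⟩ := hβ
  unfold B2S
  simp only [shortIff, PiLp.add_apply] at hs ⊢
  rcases ha0 with h|h|h <;> rcases ha1 with h'|h'|h' <;> rcases hb0 with g|g|g <;>
    rcases hb1 with g'|g'|g' <;> simp_all <;> norm_num at hs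

open Classical in
noncomputable def B2w1 (v : EuclideanSpace ℝ (Fin 2)) : ℤ :=
  if (v 0 = 1 ∧ v 1 = 0) ∨ (v 0 = 0 ∧ v 1 = 1) ∨ (v 0 = 1 ∧ v 1 = 1) then 1
  else if v 0 = -1 ∧ v 1 = -1 then -1 else 0

lemma B2w1_id {α β : EuclideanSpace ℝ (Fin 2)} (hα : α ∈ B2zero) (hβ : β ∈ B2zero)
    (hs : α + β ∈ B2zero) : omegaB2 α β = B2w1 α + B2w1 β - B2w1 (α + β) := by
  rw [zeroIff] at hα hβ hs
  obtain ⟨ha0, ha1⟩ := hα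
  obtain ⟨hb0, hb1⟩ := hβ
  rw [omega_eq]
  unfold B2w1
  simp only [B2S_ite, PiLp.add_apply] at hs ⊢
  rcases ha0 with h|h|h <;> rcases ha1 with h'|h'|h' <;> rcases hb0 with g|g|g <;>
    rcases hb1 with g'|g'|g' <;> revert hs <;> norm_num [h, h', g, g']

lemma B2S_zero : B2S 0 = 0 := by
  rw [B2S_ite]; norm_num [PiLp.zero_apply]

lemma B2S_nonneg (v) : 0 ≤ B2S v := by unfold B2S; split_ifs <;> norm_num


/-- On the root system of type `B₂`, the 2-cochain `ω` equal to `1` on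
pairs of short roots and `0` otherwise is a symmetric 2-cocycle with nonnegative values,
but it is not the coboundary of any 1-cochain taking only nonnegative values — even though
it is exact over `ℤ`. -/
theorem B2_cocycle_not_exact_over_nonneg :
    (∀ v, omegaB2 0 v = 0) ∧ (∀ v, omegaB2 v 0 = 0) ∧
    (∀ α ∈ B2zero, ∀ β ∈ B2zero, α + β ∈ B2zero → omegaB2 β α = omegaB2 α β) ∧
    (∀ α ∈ B2zero, ∀ β ∈ B2zero, ∀ γ ∈ B2zero,
      α + β ∈ B2zero → β + γ ∈ B2zero → α + β + γ ∈ B2zero →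
      omegaB2 β γ - omegaB2 (α + β) γ + omegaB2 α (β + γ) - omegaB2 α β = 0) ∧
    (∀ α β : EuclideanSpace ℝ (Fin 2), 0 ≤ omegaB2 α β) ∧
    (¬ ∃ ω1 : EuclideanSpace ℝ (Fin 2) → ℤ, (∀ v ∈ B2zero, 0 ≤ ω1 v) ∧ ω1 0 = 0 ∧
      ∀ α ∈ B2zero, ∀ β ∈ B2zero, α + β ∈ B2zero →
        omegaB2 α β = ω1 α + ω1 β - ω1 (α + β)) ∧
    (∃ ω1 : EuclideanSpace ℝ (Fin 2) → ℤ, ω1 0 = 0 ∧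
      ∀ α ∈ B2zero, ∀ β ∈ B2zero, α + β ∈ B2zero →
        omegaB2 α β = ω1 α + ω1 β - ω1 (α + β)) := by
  have mem1 : b2e1 ∈ B2zero := by rw [zeroIff]; norm_num
  have mem2 : b2e2 ∈ B2zero := by rw [zeroIff]; norm_num
  have mem2' : -b2e2 ∈ B2zero := by rw [zeroIff]; norm_num [PiLp.neg_apply]
  have memp : b2e1 + b2e2 ∈ B2zero := by rw [zeroIff]; norm_num [PiLp.add_apply]
  have memp' : -(b2e1 + b2e2) ∈ B2zero := by
    rw [zeroIff]; norm_num [PiLp.neg_apply, PiLp.add_apply]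
  have memq : b2e1 - b2e2 ∈ B2zero := by rw [zeroIff]; norm_num [PiLp.sub_apply]
  have memq' : -(b2e1 - b2e2) ∈ B2zero := by
    rw [zeroIff]; norm_num [PiLp.neg_apply, PiLp.sub_apply]
  have mem0 : (0 : EuclideanSpace ℝ (Fin 2)) ∈ B2zero := by
    rw [zeroIff]; norm_num [PiLp.zero_apply]
  have S1 : B2S b2e1 = 1 := by rw [B2S_ite]; norm_num
  have S2 : B2S b2e2 = 1 := by rw [B2S_ite]; norm_num
  have S2' : B2S (-b2e2) = 1 := by rw [B2S_ite]; norm_num [PiLp.neg_apply]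
  have Sp : B2S (b2e1 + b2e2) = 0 := by rw [B2S_ite]; norm_num [PiLp.add_apply]
  have Sp' : B2S (-(b2e1 + b2e2)) = 0 := by
    rw [B2S_ite]; norm_num [PiLp.neg_apply, PiLp.add_apply]
  have Sq : B2S (b2e1 - b2e2) = 0 := by rw [B2S_ite]; norm_num [PiLp.sub_apply]
  refine ⟨?_, ?_, ?_, ?_, ?_, ?_, ?_⟩
  · intro v; rw [omega_eq, B2S_zero]; ring
  · intro v; rw [omega_eq, B2S_zero]; ring
  · intro α _ β _ _; rw [omega_eq, omega_eq]; ring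
  · intro α hα β hβ γ hγ hab hbc habc
    have h1 : B2S (α + β) = B2S α + B2S β - 2 * B2S α * B2S β := keyS hα hβ hab
    have h2 : B2S (β + γ) = B2S β + B2S γ - 2 * B2S β * B2S γ := keyS hβ hγ hbc
    simp only [omega_eq, h1, h2]; ring
  · intro α β; rw [omega_eq]
    exact mul_nonneg (B2S_nonneg _) (B2S_nonneg _)
  · rintro ⟨ω1, hnn, h0, hid⟩
    have e1 : omegaB2 b2e2 (-b2e2) = ω1 b2e2 + ω1 (-b2e2) - ω1 (b2e2 + -b2e2) :=
      hid _ mem2 _ mem2' (by rw [add_neg_cancel]; exact mem0)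
    rw [add_neg_cancel, h0, omega_eq, S2, S2'] at e1
    have e2 : omegaB2 b2e1 b2e2 = ω1 b2e1 + ω1 b2e2 - ω1 (b2e1 + b2e2) :=
      hid _ mem1 _ mem2 memp
    rw [omega_eq, S1, S2] at e2
    have hsub : b2e1 + -b2e2 = b2e1 - b2e2 := (sub_eq_add_neg _ _).symm
    have e3 : omegaB2 b2e1 (-b2e2) = ω1 b2e1 + ω1 (-b2e2) - ω1 (b2e1 - b2e2) := by
      have := hid _ mem1 _ mem2' (by rw [hsub]; exact memq)
      rwa [hsub] at this
    rw [omega_eq, S1, S2'] at e3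
    have e4 : omegaB2 (b2e1 + b2e2) (-(b2e1 + b2e2)) =
        ω1 (b2e1 + b2e2) + ω1 (-(b2e1 + b2e2)) - ω1 ((b2e1 + b2e2) + -(b2e1 + b2e2)) :=
      hid _ memp _ memp' (by rw [add_neg_cancel]; exact mem0)
    rw [add_neg_cancel, h0, omega_eq, Sp, Sp'] at e4
    have e5 : omegaB2 (b2e1 - b2e2) (-(b2e1 - b2e2)) =
        ω1 (b2e1 - b2e2) + ω1 (-(b2e1 - b2e2)) - ω1 ((b2e1 - b2e2) + -(b2e1 - b2e2)) :=
      hid _ memq _ memq' (by rw [add_neg_cancel]; exact mem0)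
    rw [add_neg_cancel, h0, omega_eq, Sq] at e5
    have np := hnn _ memp
    have np' := hnn _ memp'
    have nq := hnn _ memq
    have nq' := hnn _ memq'
    simp only [mul_one, one_mul, mul_zero, zero_mul, sub_zero, zero_sub, add_zero, zero_add] at e1 e2 e3 e4 e5
    omega
  · exact ⟨B2w1, by unfold B2w1; norm_num [PiLp.zero_apply],
      fun α hα β hβ hs => B2w1_id hα hβ hs⟩
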